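/- Let (D₁, D₂) be a pair of real-valued random variables on a probability space whose joint law is invariant under the reflection (x, y) ↦ (2m₁ − x, 2m₂ − y) for some m₁, m₂ ∈ ℝ. Assume the cumulative distribution functions of D₁, D₂, and D₁+D₂ are continuous and strictly increasing. Then F_{D₁+D₂}⁻¹(1/2) = m₁ + m₂ = F_{D₁}⁻¹(1/2) + F_{D₂}⁻¹(1/2); that is, the pooling effect vanishes at margin ratio t = 1/2 for centrally symmetric joint demand distributions. -/

import Mathlib

open MeasureTheory ProbabilityTheory Set Filter Topology

/-- The quantile function of a distribution on `ℝ`: `F⁻¹(t) = inf {x | t ≤ F(x)}`. -/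
noncomputable def quantile (μ : Measure ℝ) (t : ℝ) : ℝ :=
  sInf {x : ℝ | t ≤ cdf μ x}

lemma cdf_symm_half (μ : Measure ℝ) [IsProbabilityMeasure μ] (m : ℝ)
    (h : Measure.map (fun x => 2 * m - x) μ = μ) (hc : Continuous (cdf μ)) :
    cdf μ m = 1 / 2 := by
  have hmeas : Measurable (fun x : ℝ => 2 * m - x) := (measurable_const.sub measurable_id)
  have h1 : μ (Iic m) = μ (Ici m) := by
    conv_lhs => rw [← h]
    rw [Measure.map_apply hmeas measurableSet_Iic]
    congr 1
    ext x
    simp only [mem_preimage, mem_Iic, mem_Ici]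
    constructor <;> intro hx <;> linarith
  have hsingle : μ {m} = 0 := by
    have := measure_cdf (μ := μ)
    rw [← this, StieltjesFunction.measure_singleton]
    have hll : Function.leftLim (cdf μ) m = cdf μ m :=
      leftLim_eq_of_tendsto
        ((hc.tendsto m).mono_left nhdsWithin_le_nhds)
    simp [hll]
  have hsplit : μ (Iic m) + μ (Ioi m) = 1 := by
    rw [← measure_union (by simp [disjoint_left]) measurableSet_Ioi]
    simp
  have hIci : μ (Ici m) = μ (Ioi m) + μ {m} := by
    rw [← measure_union (by simp [disjoint_left]; exact fun a ha => ne_of_gt ha) (measurableSet_singleton m)]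
    congr 1
    ext x; simp [le_iff_lt_or_eq, or_comm, eq_comm]
  have hIoi : μ (Ioi m) = μ (Iic m) := by
    rw [h1, hIci, hsingle, add_zero]
  rw [hIoi] at hsplit
  have hne : μ (Iic m) ≠ ⊤ := measure_ne_top μ _
  have hr : (μ (Iic m)).toReal + (μ (Iic m)).toReal = 1 := by
    have := congrArg ENNReal.toReal hsplit
    rwa [ENNReal.toReal_add hne hne, ENNReal.toReal_one] at this
  rw [cdf_eq_real, measureReal_def]
  linarith

lemma quantile_eq_of_cdf_half (μ : Measure ℝ) (m : ℝ)
    (hm : StrictMono (cdf μ)) (hhalf : cdf μ m = 1 / 2) :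
    quantile μ (1 / 2) = m := by
  have : {x : ℝ | 1 / 2 ≤ cdf μ x} = Ici m := by
    ext x
    simp only [mem_setOf_eq, mem_Ici, ← hhalf, hm.le_iff_le]
  rw [quantile, this, csInf_Ici]

theorem pooling_effect_zero_at_half_of_symmetric {Ω : Type*} [MeasurableSpace Ω]
    (P : Measure Ω) [IsProbabilityMeasure P] (D₁ D₂ : Ω → ℝ)
    (hD₁ : Measurable D₁) (hD₂ : Measurable D₂) (m₁ m₂ : ℝ)
    (hsym : Measure.map (fun p : ℝ × ℝ => (2 * m₁ - p.1, 2 * m₂ - p.2))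
        (Measure.map (fun ω => (D₁ ω, D₂ ω)) P) = Measure.map (fun ω => (D₁ ω, D₂ ω)) P)
    (hc₁ : Continuous (cdf (Measure.map D₁ P)))
    (hc₂ : Continuous (cdf (Measure.map D₂ P)))
    (hcs : Continuous (cdf (Measure.map (fun ω => D₁ ω + D₂ ω) P)))
    (hm₁ : StrictMono (cdf (Measure.map D₁ P)))
    (hm₂ : StrictMono (cdf (Measure.map D₂ P)))
    (hms : StrictMono (cdf (Measure.map (fun ω => D₁ ω + D₂ ω) P))) :
    quantile (Measure.map (fun ω => D₁ ω + D₂ ω) P) (1 / 2) = m₁ + m₂ ∧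
      m₁ + m₂ = quantile (Measure.map D₁ P) (1 / 2) + quantile (Measure.map D₂ P) (1 / 2) := by
  set ν := Measure.map (fun ω => (D₁ ω, D₂ ω)) P with hν
  have hpair : Measurable (fun ω => (D₁ ω, D₂ ω)) := hD₁.prodMk hD₂
  have hRefl : Measurable (fun p : ℝ × ℝ => (2 * m₁ - p.1, 2 * m₂ - p.2)) :=
    ((measurable_const.sub measurable_fst).prodMk (measurable_const.sub measurable_snd))
  have hmap1 : Measure.map D₁ P = Measure.map Prod.fst ν := by
    rw [hν, Measure.map_map measurable_fst hpair]; rfl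
  have hmap2 : Measure.map D₂ P = Measure.map Prod.snd ν := by
    rw [hν, Measure.map_map measurable_snd hpair]; rfl
  have hmaps : Measure.map (fun ω => D₁ ω + D₂ ω) P
      = Measure.map (fun p : ℝ × ℝ => p.1 + p.2) ν := by
    rw [hν, Measure.map_map (g := fun p : ℝ × ℝ => p.1 + p.2) (measurable_fst.add measurable_snd) hpair]; rfl
  have inst1 : IsProbabilityMeasure (Measure.map D₁ P) := Measure.isProbabilityMeasure_map hD₁.aemeasurable
  have inst2 : IsProbabilityMeasure (Measure.map D₂ P) := Measure.isProbabilityMeasure_map hD₂.aemeasurable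
  have insts : IsProbabilityMeasure (Measure.map (fun ω => D₁ ω + D₂ ω) P) :=
    Measure.isProbabilityMeasure_map (hD₁.add hD₂).aemeasurable
  have hsym1 : Measure.map (fun x => 2 * m₁ - x) (Measure.map D₁ P) = Measure.map D₁ P := by
    rw [hmap1, Measure.map_map (show Measurable fun x : ℝ => 2 * m₁ - x by fun_prop) measurable_fst]
    conv_rhs => rw [← hsym]
    rw [Measure.map_map measurable_fst hRefl]
    rfl
  have hsym2 : Measure.map (fun x => 2 * m₂ - x) (Measure.map D₂ P) = Measure.map D₂ P := by
    rw [hmap2, Measure.map_map (show Measurable fun x : ℝ => 2 * m₂ - x by fun_prop) measurable_snd]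
    conv_rhs => rw [← hsym]
    rw [Measure.map_map measurable_snd hRefl]
    rfl
  have hsyms : Measure.map (fun x => 2 * (m₁ + m₂) - x)
      (Measure.map (fun ω => D₁ ω + D₂ ω) P) = Measure.map (fun ω => D₁ ω + D₂ ω) P := by
    rw [hmaps, Measure.map_map (show Measurable fun x : ℝ => 2 * (m₁ + m₂) - x by fun_prop)
      (f := fun p : ℝ × ℝ => p.1 + p.2) (measurable_fst.add measurable_snd)]
    conv_rhs => rw [← hsym]
    rw [Measure.map_map (g := fun p : ℝ × ℝ => p.1 + p.2) (measurable_fst.add measurable_snd) hRefl]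
    congr 1
    ext p
    simp only [Function.comp_apply]
    ring
  refine ⟨quantile_eq_of_cdf_half _ _ hms (cdf_symm_half _ _ hsyms hcs), ?_⟩
  rw [quantile_eq_of_cdf_half _ _ hm₁ (cdf_symm_half _ _ hsym1 hc₁),
    quantile_eq_of_cdf_half _ _ hm₂ (cdf_symm_half _ _ hsym2 hc₂)]
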